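/- If a probability distribution ρ satisfies detailed balance for the rates W, then for every t ∈ ℝ and all f, g : K → ℝ, ∑_x ρ(x) f(x) (e^{tL} g)(x) = ∑_x ρ(x) g(x) (e^{tL} f)(x); that is, stationary equilibrium two-time correlation functions are time-reversal symmetric. -/

import Mathlib

open Matrix

/-- The generator matrix of the Markov jump process with rates `W`:
entry `W x y` at `(x, y)` for `x ≠ y` and `-∑_{y ≠ x} W x y` on the diagonal. -/
noncomputable def genMatrix {K : Type*} [Fintype K] [DecidableEq K] (W : K → K → ℝ) :
    Matrix K K ℝ :=
  Matrix.of fun x y =>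
    if x = y then -∑ z ∈ Finset.univ.filter (fun z => z ≠ x), W x z else W x y

/-- The semigroup `e^{tL}` (matrix exponential of `t • L`). -/
noncomputable def expL {K : Type*} [Fintype K] [DecidableEq K] (W : K → K → ℝ) (t : ℝ) :
    Matrix K K ℝ :=
  NormedSpace.exp (t • genMatrix W)

lemma mul_exp_of_symm {K : Type*} [Fintype K] [DecidableEq K]
    (D A : Matrix K K ℝ) (h : D * A = Matrix.transpose A * D) :
    D * NormedSpace.exp A = NormedSpace.exp (Matrix.transpose A) * D := by
  letI : SeminormedRing (Matrix K K ℝ) := Matrix.linftyOpSemiNormedRing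
  letI : NormedRing (Matrix K K ℝ) := Matrix.linftyOpNormedRing
  letI : NormedAlgebra ℝ (Matrix K K ℝ) := Matrix.linftyOpNormedAlgebra
  have hn : ∀ n : ℕ, D * A ^ n = (Matrix.transpose A) ^ n * D := by
    intro n
    induction n with
    | zero => simp
    | succ n ih =>
      rw [pow_succ, ← mul_assoc, ih, mul_assoc, h, pow_succ, mul_assoc]
  have hs : Summable (fun n : ℕ => (↑(Nat.factorial n) : ℝ)⁻¹ • A ^ n) := NormedSpace.expSeries_summable' A
  have hs' : Summable (fun n : ℕ => (↑(Nat.factorial n) : ℝ)⁻¹ • (Matrix.transpose A) ^ n) :=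
    NormedSpace.expSeries_summable' (Matrix.transpose A)
  simp only [NormedSpace.exp_eq_tsum ℝ]
  rw [← hs.tsum_mul_left D, ← hs'.tsum_mul_right D]
  congr 1
  funext n
  rw [mul_smul_comm, hn n, smul_mul_assoc]

theorem equilibrium_correlations_time_reversal
    {K : Type*} [Fintype K] [Nonempty K] [DecidableEq K]
    (W : K → K → ℝ) (hW : ∀ x y : K, x ≠ y → 0 ≤ W x y)
    (ρ : K → ℝ) (hρ0 : ∀ x, 0 ≤ ρ x) (hρ1 : ∑ x, ρ x = 1)
    (hdb : ∀ x y : K, ρ x * W x y = ρ y * W y x)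
    (t : ℝ) (f g : K → ℝ) :
    ∑ x, ρ x * f x * (∑ y, expL W t x y * g y) =
      ∑ x, ρ x * g x * (∑ y, expL W t x y * f y) := by
  set A : Matrix K K ℝ := t • genMatrix W with hA
  have hDA : Matrix.diagonal ρ * A = Matrix.transpose A * Matrix.diagonal ρ := by
    ext x y
    simp only [hA, Matrix.diagonal_mul, Matrix.mul_diagonal, Matrix.transpose_apply,
      Matrix.smul_apply, smul_eq_mul, genMatrix, Matrix.of_apply]
    by_cases hxy : x = y
    · subst hxy; ring
    · rw [if_neg hxy, if_neg (fun h => hxy h.symm)]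
      linear_combination t * hdb x y
  have hE := mul_exp_of_symm (Matrix.diagonal ρ) A hDA
  have hEntry : ∀ x y, ρ x * expL W t x y = ρ y * expL W t y x := by
    intro x y
    have h1 := congrFun (congrFun hE x) y
    rw [Matrix.exp_transpose] at h1
    simpa [expL, ← hA, Matrix.diagonal_mul, Matrix.mul_diagonal, Matrix.transpose_apply,
      mul_comm] using h1
  calc ∑ x, ρ x * f x * (∑ y, expL W t x y * g y)
      = ∑ x, ∑ y, (ρ x * expL W t x y) * (f x * g y) := by
        refine Finset.sum_congr rfl fun x _ => ?_
        rw [Finset.mul_sum]; refine Finset.sum_congr rfl fun y _ => ?_; ring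
    _ = ∑ x, ∑ y, (ρ y * expL W t y x) * (f x * g y) := by
        refine Finset.sum_congr rfl fun x _ => Finset.sum_congr rfl fun y _ => ?_
        rw [hEntry]
    _ = ∑ x, ρ x * g x * (∑ y, expL W t x y * f y) := by
        rw [Finset.sum_comm]
        refine Finset.sum_congr rfl fun x _ => ?_
        rw [Finset.mul_sum]; refine Finset.sum_congr rfl fun y _ => ?_; ring
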